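/- Let P_X and P_Y be projection matrices of two distinct s-dimensional subspaces of ℝ^N. If a symmetric matrix Φ commutes with both P_X and P_Y, then max(‖Φ − P_X‖_F, ‖Φ − P_Y‖_F) ≥ 1/√2. -/

import Mathlib

open Matrix

noncomputable def frobNorm {n m : ℕ} (A : Matrix (Fin n) (Fin m) ℝ) : ℝ :=
  Real.sqrt ((Aᵀ * A).trace)

namespace Stmt13Aux

variable {N : ℕ}

lemma symm_dot (M : Matrix (Fin N) (Fin N) ℝ) (hM : Mᵀ = M) (x y : Fin N → ℝ) :
    (M *ᵥ x) ⬝ᵥ y = x ⬝ᵥ (M *ᵥ y) := by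
  rw [dotProduct_mulVec x M y, ← hM, vecMul_transpose, hM]

lemma dot_mulVec_transpose (M : Matrix (Fin N) (Fin N) ℝ) (x y : Fin N → ℝ) :
    x ⬝ᵥ (Mᵀ *ᵥ y) = (M *ᵥ x) ⬝ᵥ y := by
  rw [mulVec_transpose, dotProduct_comm (M *ᵥ x) y, dotProduct_mulVec, dotProduct_comm]

lemma dot_self_nonneg' (v : Fin N → ℝ) : 0 ≤ v ⬝ᵥ v :=
  Finset.sum_nonneg fun _ _ => mul_self_nonneg _

lemma dot_pos {v : Fin N → ℝ} (hv : v ≠ 0) : 0 < v ⬝ᵥ v := by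
  rcases lt_or_eq_of_le (dot_self_nonneg' v) with h | h
  · exact h
  · exact absurd (dotProduct_self_eq_zero.mp h.symm) hv

lemma trace_transpose_mul_self_nonneg (A : Matrix (Fin N) (Fin N) ℝ) : 0 ≤ (Aᵀ * A).trace := by
  rw [Matrix.trace]
  refine Finset.sum_nonneg fun j _ => ?_
  simp only [Matrix.diag_apply, Matrix.mul_apply, Matrix.transpose_apply]
  exact Finset.sum_nonneg fun i _ => mul_self_nonneg _

lemma trace_mul_vecMulVec (M : Matrix (Fin N) (Fin N) ℝ) (v w : Fin N → ℝ) :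
    (M * vecMulVec v w).trace = w ⬝ᵥ (M *ᵥ v) := by
  simp only [Matrix.trace, Matrix.diag_apply, Matrix.mul_apply, vecMulVec_apply,
    dotProduct, mulVec, Finset.mul_sum]
  exact Finset.sum_congr rfl fun i _ => Finset.sum_congr rfl fun k _ => by ring

lemma vecMulVec_mul' (a b c d : Fin N → ℝ) :
    vecMulVec a b * vecMulVec c d = (b ⬝ᵥ c) • vecMulVec a d := by
  ext i j
  simp only [Matrix.mul_apply, vecMulVec_apply, Matrix.smul_apply, dotProduct, smul_eq_mul,
    Finset.sum_mul]
  exact Finset.sum_congr rfl fun k _ => by ring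

lemma vecMulVec_transpose' (a : Fin N → ℝ) : (vecMulVec a a)ᵀ = vecMulVec a a := by
  ext i j
  simp [vecMulVec_apply, mul_comm]

lemma L2 (A : Matrix (Fin N) (Fin N) ℝ) (v w : Fin N → ℝ)
    (hv : v ⬝ᵥ v = 1) (hw : w ⬝ᵥ w = 1) (hvw : v ⬝ᵥ w = 0) :
    (A *ᵥ v) ⬝ᵥ (A *ᵥ v) + (A *ᵥ w) ⬝ᵥ (A *ᵥ w) ≤ (Aᵀ * A).trace := by
  set Q : Matrix (Fin N) (Fin N) ℝ := vecMulVec v v + vecMulVec w w with hQdef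
  have hwv : w ⬝ᵥ v = 0 := by rwa [dotProduct_comm]
  have hQQ : Q * Q = Q := by
    simp only [hQdef, add_mul, mul_add, vecMulVec_mul', hv, hw, hvw, hwv, one_smul, zero_smul,
      add_zero, zero_add]
  have hQT : Qᵀ = Q := by
    simp only [hQdef, Matrix.transpose_add, vecMulVec_transpose']
  set P : Matrix (Fin N) (Fin N) ℝ := 1 - Q with hPdef
  have hPP : P * P = P := by
    simp only [hPdef, sub_mul, mul_sub, one_mul, mul_one, hQQ]
    abel
  have hPT : Pᵀ = P := by simp [hPdef, hQT, transpose_sub]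
  have hsplit : (Aᵀ * A).trace = (Aᵀ * A * Q).trace + (Aᵀ * A * P).trace := by
    rw [← Matrix.trace_add, ← Matrix.mul_add]
    simp [hPdef]
  have h1 : (Aᵀ * A * Q).trace = (A *ᵥ v) ⬝ᵥ (A *ᵥ v) + (A *ᵥ w) ⬝ᵥ (A *ᵥ w) := by
    rw [hQdef, Matrix.mul_add, Matrix.trace_add, trace_mul_vecMulVec, trace_mul_vecMulVec]
    rw [← Matrix.mulVec_mulVec, ← Matrix.mulVec_mulVec, dot_mulVec_transpose,
      dot_mulVec_transpose]
  have e1 : (A * P)ᵀ * (A * P) = P * (Aᵀ * A * P) := by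
    rw [Matrix.transpose_mul, hPT]; noncomm_ring
  have h2 : 0 ≤ (Aᵀ * A * P).trace := by
    have e2 : (Aᵀ * A * P).trace = ((A * P)ᵀ * (A * P)).trace := calc
      (Aᵀ * A * P).trace = (Aᵀ * A * (P * P)).trace := by rw [hPP]
      _ = ((Aᵀ * A * P) * P).trace := by rw [← mul_assoc (Aᵀ * A) P P]
      _ = (P * (Aᵀ * A * P)).trace := Matrix.trace_mul_comm _ _
      _ = ((A * P)ᵀ * (A * P)).trace := by rw [e1]
    rw [e2]
    exact trace_transpose_mul_self_nonneg _
  linarith [h1, h2, hsplit]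

lemma L2' (A : Matrix (Fin N) (Fin N) ℝ) (v w : Fin N → ℝ) {q : ℝ}
    (hv : v ⬝ᵥ v = 1) (hw : w ⬝ᵥ w = q) (hq : 0 < q) (hvw : v ⬝ᵥ w = 0) :
    (A *ᵥ v) ⬝ᵥ (A *ᵥ v) + q⁻¹ * ((A *ᵥ w) ⬝ᵥ (A *ᵥ w)) ≤ (Aᵀ * A).trace := by
  set s : ℝ := Real.sqrt q with hs
  have hss : s * s = q := Real.mul_self_sqrt hq.le
  have hsne : s ≠ 0 := by positivity
  have h1 : (s⁻¹ • w) ⬝ᵥ (s⁻¹ • w) = 1 := by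
    rw [smul_dotProduct, dotProduct_smul, hw, smul_eq_mul, smul_eq_mul, ← hss]
    field_simp
  have h2 : v ⬝ᵥ (s⁻¹ • w) = 0 := by rw [dotProduct_smul, hvw, smul_zero]
  have h3 := L2 A v (s⁻¹ • w) hv h1 h2
  rw [Matrix.mulVec_smul, smul_dotProduct, dotProduct_smul] at h3
  have : q⁻¹ * ((A *ᵥ w) ⬝ᵥ (A *ᵥ w)) = s⁻¹ • s⁻¹ • ((A *ᵥ w) ⬝ᵥ (A *ᵥ w)) := by
    rw [smul_eq_mul, smul_eq_mul, ← hss, ← mul_assoc, mul_inv]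
  rw [this]
  exact h3

lemma dot_lin {v w : Fin N → ℝ} {p q : ℝ} (hv : v ⬝ᵥ v = p) (hw : w ⬝ᵥ w = q)
    (hvw : v ⬝ᵥ w = 0) (a b c d : ℝ) :
    (a • v + b • w) ⬝ᵥ (c • v + d • w) = a * c * p + b * d * q := by
  have hwv : w ⬝ᵥ v = 0 := by rwa [dotProduct_comm]
  simp only [add_dotProduct, dotProduct_add, smul_dotProduct, dotProduct_smul, smul_eq_mul,
    hv, hw, hvw, hwv, mul_zero, add_zero, zero_add]
  ring

lemma half_vec {x y : Fin N → ℝ} (h : x + x = y) : x = (1/2 : ℝ) • y := by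
  funext i
  have := congrFun h i
  simp only [Pi.add_apply, Pi.smul_apply, smul_eq_mul] at this ⊢
  linarith

lemma herm_of_sym {A : Matrix (Fin N) (Fin N) ℝ} (h : Aᵀ = A) : A.IsHermitian := by
  rwa [Matrix.IsHermitian, Matrix.conjTranspose_eq_transpose_of_trivial]

lemma trace_eq_sum_eigenvalues {A : Matrix (Fin N) (Fin N) ℝ} (hA : A.IsHermitian) :
    A.trace = ∑ i, hA.eigenvalues i := by
  conv_lhs => rw [hA.spectral_theorem]
  rw [Unitary.conjStarAlgAut_apply]
  rw [Matrix.trace_mul_comm, ← mul_assoc, Unitary.coe_star_mul_self, one_mul]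
  simp [Matrix.trace_diagonal]

lemma eig_idem {P : Matrix (Fin N) (Fin N) ℝ} (hP : P.IsHermitian) (h2 : P * P = P) (i : Fin N) :
    hP.eigenvalues i = 0 ∨ hP.eigenvalues i = 1 := by
  have hb := hP.mulVec_eigenvectorBasis i
  have hbne : ⇑(hP.eigenvectorBasis i) ≠ 0 := by
    have h0 : hP.eigenvectorBasis i ≠ 0 := hP.eigenvectorBasis.toBasis.ne_zero i
    intro hc
    apply h0
    ext j
    exact congrFun hc j
  have key : (hP.eigenvalues i * hP.eigenvalues i) • ⇑(hP.eigenvectorBasis i)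
      = hP.eigenvalues i • ⇑(hP.eigenvectorBasis i) := by
    calc (hP.eigenvalues i * hP.eigenvalues i) • ⇑(hP.eigenvectorBasis i)
        = P *ᵥ (P *ᵥ ⇑(hP.eigenvectorBasis i)) := by
          rw [hb, Matrix.mulVec_smul, hb, smul_smul]
      _ = (P * P) *ᵥ ⇑(hP.eigenvectorBasis i) := by rw [← Matrix.mulVec_mulVec]
      _ = hP.eigenvalues i • ⇑(hP.eigenvectorBasis i) := by rw [h2, hb]
  have : (hP.eigenvalues i * hP.eigenvalues i - hP.eigenvalues i) • ⇑(hP.eigenvectorBasis i) = 0 := by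
    rw [sub_smul, key, sub_self]
  rcases smul_eq_zero.mp this with h | h
  · have : hP.eigenvalues i * (hP.eigenvalues i - 1) = 0 := by ring_nf; linarith [h]
    rcases mul_eq_zero.mp this with h' | h'
    · exact Or.inl h'
    · exact Or.inr (by linarith)
  · exact absurd h hbne

lemma trace_idem {P : Matrix (Fin N) (Fin N) ℝ} (hP : P.IsHermitian) (h2 : P * P = P) :
    P.trace = (P.rank : ℝ) := by
  classical
  rw [trace_eq_sum_eigenvalues hP, hP.rank_eq_card_non_zero_eigs]
  rw [Fintype.card_subtype]
  rw [← Finset.sum_boole]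
  refine Finset.sum_congr rfl fun i _ => ?_
  rcases eig_idem hP h2 i with h | h <;> simp [h]

lemma basis_ne {A : Matrix (Fin N) (Fin N) ℝ} (hA : A.IsHermitian) (i : Fin N) :
    ⇑(hA.eigenvectorBasis i) ≠ 0 := by
  have h0 : hA.eigenvectorBasis i ≠ 0 := hA.eigenvectorBasis.toBasis.ne_zero i
  intro hc
  apply h0
  ext j
  exact congrFun hc j

lemma eig_signs {E : Matrix (Fin N) (Fin N) ℝ} (hermE : E.IsHermitian)
    (htr : E.trace = 0) (hEne : E ≠ 0) :
    (∃ i, hermE.eigenvalues i < 0) ∧ (∃ i, 0 < hermE.eigenvalues i) := by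
  have hsum : ∑ i, hermE.eigenvalues i = 0 := by
    rw [← trace_eq_sum_eigenvalues hermE, htr]
  have hex : ∃ i, hermE.eigenvalues i ≠ 0 := by
    by_contra h
    push_neg at h
    apply hEne
    rw [hermE.spectral_theorem]
    have hd : Matrix.diagonal (RCLike.ofReal ∘ hermE.eigenvalues)
        = (0 : Matrix (Fin N) (Fin N) ℝ) := by
      ext i j
      simp [Matrix.diagonal_apply, h i]
    rw [hd, map_zero]
  obtain ⟨i0, hi0⟩ := hex
  constructor
  · by_contra h
    push_neg at h
    exact hi0 (Finset.sum_eq_zero_iff_of_nonneg (fun i _ => h i) |>.mp hsum i0 (Finset.mem_univ _))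
  · by_contra h
    push_neg at h
    have hsum' : ∑ i, (-hermE.eigenvalues i) = 0 := by
      rw [Finset.sum_neg_distrib, hsum, neg_zero]
    have := Finset.sum_eq_zero_iff_of_nonneg
      (fun i _ => neg_nonneg.mpr (h i)) |>.mp hsum' i0 (Finset.mem_univ _)
    exact hi0 (by linarith)

lemma toEuc_mul (M₁ M₂ : Matrix (Fin N) (Fin N) ℝ) :
    Matrix.toEuclideanLin (M₁ * M₂) = Matrix.toEuclideanLin M₁ * Matrix.toEuclideanLin M₂ := by
  apply LinearMap.ext
  intro x
  show Matrix.toEuclideanLin (M₁ * M₂) x = Matrix.toEuclideanLin M₁ (Matrix.toEuclideanLin M₂ x)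
  simp only [Matrix.toEuclideanLin_apply]
  simp [← Matrix.mulVec_mulVec]

lemma joint_eigen {E Φ : Matrix (Fin N) (Fin N) ℝ} (hE : Eᵀ = E) (hΦ : Φᵀ = Φ)
    (hc : Φ * E = E * Φ) {lam : ℝ} {b : Fin N → ℝ} (hb : b ≠ 0) (hEb : E *ᵥ b = lam • b) :
    ∃ (u : Fin N → ℝ) (μ : ℝ), u ⬝ᵥ u = 1 ∧ E *ᵥ u = lam • u ∧ Φ *ᵥ u = μ • u := by
  classical
  have hEherm : E.IsHermitian := herm_of_sym hE
  have hΦherm : Φ.IsHermitian := herm_of_sym hΦ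
  set Eo := Matrix.toEuclideanLin E with hEo
  set T := Matrix.toEuclideanLin Φ with hT
  have hTsymm : T.IsSymmetric := Matrix.isHermitian_iff_isSymmetric.mp hΦherm
  have hComm : Commute Eo T := by
    show Eo * T = T * Eo
    rw [← toEuc_mul, ← toEuc_mul, hc]
  set b' : EuclideanSpace ℝ (Fin N) := (WithLp.equiv 2 (Fin N → ℝ)).symm b with hb'
  have hb'ne : b' ≠ 0 := by
    intro hc0
    apply hb
    have := congrArg (WithLp.equiv 2 (Fin N → ℝ)) hc0
    simpa [hb'] using this
  have hmem : b' ∈ Module.End.eigenspace Eo lam := by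
    rw [Module.End.mem_eigenspace_iff]
    rw [hb', hEo]
    show Matrix.toEuclideanLin E (WithLp.toLp 2 b) = lam • WithLp.toLp 2 b
    rw [Matrix.toEuclideanLin_apply_piLp_toLp, hEb]
    simp
  have hbot : Module.End.eigenspace Eo lam ≠ ⊥ := by
    intro h
    rw [h] at hmem
    exact hb'ne (Submodule.mem_bot ℝ |>.mp hmem)
  have hsup := LinearMap.IsSymmetric.iSup_eigenspace_inf_eigenspace_of_commute
    (A := Eo) (α := lam) hTsymm hComm
  have : ∃ γ : ℝ, (Module.End.eigenspace Eo lam ⊓ Module.End.eigenspace T γ) ≠ ⊥ := by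
    by_contra hno
    push_neg at hno
    apply hbot
    rw [← hsup]
    simp [hno]
  obtain ⟨γ, hγ⟩ := this
  obtain ⟨u', hu'mem, hu'ne⟩ := Submodule.exists_mem_ne_zero_of_ne_bot hγ
  have hEu' : Eo u' = lam • u' := Module.End.mem_eigenspace_iff.mp hu'mem.1
  have hTu' : T u' = γ • u' := Module.End.mem_eigenspace_iff.mp hu'mem.2
  set u₀ : Fin N → ℝ := WithLp.equiv 2 (Fin N → ℝ) u' with hu₀
  have hu₀ne : u₀ ≠ 0 := by
    intro h0
    apply hu'ne
    have := congrArg (WithLp.equiv 2 (Fin N → ℝ)).symm (hu₀ ▸ h0)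
    simpa using this
  have hEu₀ : E *ᵥ u₀ = lam • u₀ := by
    have := congrArg (WithLp.equiv 2 (Fin N → ℝ)) hEu'
    simpa [hEo, Matrix.ofLp_toEuclideanLin_apply, hu₀] using this
  have hΦu₀ : Φ *ᵥ u₀ = γ • u₀ := by
    have := congrArg (WithLp.equiv 2 (Fin N → ℝ)) hTu'
    simpa [hT, Matrix.ofLp_toEuclideanLin_apply, hu₀] using this
  have hpos : 0 < u₀ ⬝ᵥ u₀ := dot_pos hu₀ne
  set c : ℝ := Real.sqrt (u₀ ⬝ᵥ u₀) with hcdef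
  have hcpos : 0 < c := Real.sqrt_pos.mpr hpos
  refine ⟨c⁻¹ • u₀, γ, ?_, ?_, ?_⟩
  · rw [smul_dotProduct, dotProduct_smul, smul_eq_mul, smul_eq_mul]
    have hc2 : c * c = u₀ ⬝ᵥ u₀ := Real.mul_self_sqrt hpos.le
    rw [← hc2]
    field_simp
  · rw [Matrix.mulVec_smul, hEu₀, smul_comm]
  · rw [Matrix.mulVec_smul, hΦu₀, smul_comm]

lemma S_facts {PX PY : Matrix (Fin N) (Fin N) ℝ}
    (hPXt : PXᵀ = PX) (hPX2 : PX * PX = PX)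
    (hPYt : PYᵀ = PY) (hPY2 : PY * PY = PY)
    {u : Fin N → ℝ} {l : ℝ} (hu : u ⬝ᵥ u = 1) (hEu : (PX - PY) *ᵥ u = l • u) :
    ((PX + PY - 1) *ᵥ u) ⬝ᵥ ((PX + PY - 1) *ᵥ u) = 1 - l^2 := by
  set E : Matrix (Fin N) (Fin N) ℝ := PX - PY with hEdef
  set S : Matrix (Fin N) (Fin N) ℝ := PX + PY - 1 with hSdef
  have hSt : Sᵀ = S := by simp [hSdef, transpose_sub, transpose_add, hPXt, hPYt]
  have hSS : S * S = 1 - E * E := by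
    have h1 : S * S = PX * PY + PY * PX + 1 - PX - PY := by
      simp only [hSdef, sub_mul, mul_sub, mul_add, add_mul, mul_one, one_mul, hPX2, hPY2]
      abel
    have h2 : E * E = PX + PY - PX * PY - PY * PX := by
      simp only [hEdef, sub_mul, mul_sub, hPX2, hPY2]
      abel
    rw [h1, h2]; abel
  have hSw : S *ᵥ (S *ᵥ u) = (1 - l^2) • u := by
    rw [Matrix.mulVec_mulVec, hSS, Matrix.sub_mulVec, Matrix.one_mulVec,
      ← Matrix.mulVec_mulVec, hEu, Matrix.mulVec_smul, hEu, smul_smul]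
    funext i
    simp only [Pi.sub_apply, Pi.smul_apply, smul_eq_mul]
    ring
  have h1 : (S *ᵥ u) ⬝ᵥ (S *ᵥ u) = u ⬝ᵥ (S *ᵥ (S *ᵥ u)) := symm_dot S hSt u (S *ᵥ u)
  rw [h1, hSw, dotProduct_smul, hu, smul_eq_mul, mul_one]

lemma sq_le_one_of_eig {PX PY : Matrix (Fin N) (Fin N) ℝ}
    (hPXt : PXᵀ = PX) (hPX2 : PX * PX = PX)
    (hPYt : PYᵀ = PY) (hPY2 : PY * PY = PY)
    {u : Fin N → ℝ} {l : ℝ} (hu : u ⬝ᵥ u = 1) (hEu : (PX - PY) *ᵥ u = l • u) :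
    l ^ 2 ≤ 1 := by
  have h := S_facts hPXt hPX2 hPYt hPY2 hu hEu
  have := dot_self_nonneg' ((PX + PY - 1) *ᵥ u)
  linarith

lemma proj_vals {PX PY : Matrix (Fin N) (Fin N) ℝ}
    (hPXt : PXᵀ = PX) (hPX2 : PX * PX = PX)
    (hPYt : PYᵀ = PY) (hPY2 : PY * PY = PY)
    {u : Fin N → ℝ} {l : ℝ} (hu : u ⬝ᵥ u = 1) (hEu : (PX - PY) *ᵥ u = l • u)
    (hl : l^2 = 1) :
    PX *ᵥ u = ((1+l)/2) • u ∧ PY *ᵥ u = ((1-l)/2) • u := by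
  have hS0 : (PX + PY - 1) *ᵥ u = 0 := by
    have h := S_facts hPXt hPX2 hPYt hPY2 hu hEu
    rw [hl, sub_self] at h
    exact dotProduct_self_eq_zero.mp h
  have hPXdec : PX + PX = 1 + (PX - PY) + (PX + PY - 1) := by abel
  have hPYdec : PY + PY = 1 + (PX + PY - 1) - (PX - PY) := by abel
  constructor
  · have h := congrArg (fun M => M *ᵥ u) hPXdec
    simp only [Matrix.add_mulVec, Matrix.one_mulVec, hEu, hS0, add_zero] at h
    have := half_vec h
    rw [this]
    funext i
    simp only [Pi.add_apply, Pi.smul_apply, smul_eq_mul]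
    ring
  · have h := congrArg (fun M => M *ᵥ u) hPYdec
    simp only [Matrix.add_mulVec, Matrix.sub_mulVec, Matrix.one_mulVec, hEu, hS0,
      add_zero, zero_sub] at h
    have := half_vec h
    rw [this]
    funext i
    simp only [Pi.add_apply, Pi.sub_apply, Pi.smul_apply, Pi.neg_apply, smul_eq_mul]
    ring

lemma twoD {PX PY Φ : Matrix (Fin N) (Fin N) ℝ}
    (hPXt : PXᵀ = PX) (hPX2 : PX * PX = PX)
    (hPYt : PYᵀ = PY) (hPY2 : PY * PY = PY)
    (hc1 : Φ * PX = PX * Φ) (hc2 : Φ * PY = PY * Φ)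
    {u : Fin N → ℝ} {l m : ℝ}
    (hu : u ⬝ᵥ u = 1) (hEu : (PX - PY) *ᵥ u = l • u) (hΦu : Φ *ᵥ u = m • u)
    (hlne : l ≠ 0) (hl2 : l ^ 2 < 1) :
    1 ≤ ((Φ - PX)ᵀ * (Φ - PX)).trace + ((Φ - PY)ᵀ * (Φ - PY)).trace := by
  set E : Matrix (Fin N) (Fin N) ℝ := PX - PY with hEdef
  set S : Matrix (Fin N) (Fin N) ℝ := PX + PY - 1 with hSdef
  have hEt : Eᵀ = E := by simp [hEdef, transpose_sub, hPXt, hPYt]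
  have hSt : Sᵀ = S := by simp [hSdef, transpose_sub, transpose_add, hPXt, hPYt]
  have hΦS : Φ * S = S * Φ := by
    simp only [hSdef, mul_sub, sub_mul, mul_add, add_mul, mul_one, one_mul, hc1, hc2]
  have hES : E * S = -(S * E) := by
    have h1 : E * S = PX * PY - PY * PX := by
      simp only [hEdef, hSdef, sub_mul, mul_sub, mul_add, add_mul, mul_one, hPX2, hPY2]
      abel
    have h2 : S * E = PY * PX - PX * PY := by
      simp only [hEdef, hSdef, sub_mul, mul_sub, mul_add, add_mul, one_mul, hPX2, hPY2]
      abel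
    rw [h1, h2]; abel
  have hSS : S * S = 1 - E * E := by
    have h1 : S * S = PX * PY + PY * PX + 1 - PX - PY := by
      simp only [hSdef, sub_mul, mul_sub, mul_add, add_mul, mul_one, one_mul, hPX2, hPY2]
      abel
    have h2 : E * E = PX + PY - PX * PY - PY * PX := by
      simp only [hEdef, sub_mul, mul_sub, hPX2, hPY2]
      abel
    rw [h1, h2]; abel
  have hPXdec : PX + PX = 1 + E + S := by rw [hEdef, hSdef]; abel
  have hPYdec : PY + PY = 1 + S - E := by rw [hEdef, hSdef]; abel
  set w : Fin N → ℝ := S *ᵥ u with hwdef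
  have hEw : E *ᵥ w = (-l) • w := by
    rw [hwdef, Matrix.mulVec_mulVec, hES, Matrix.neg_mulVec, ← Matrix.mulVec_mulVec, hEu,
      Matrix.mulVec_smul]
    rw [neg_smul]
  have hΦw : Φ *ᵥ w = m • w := by
    rw [hwdef, Matrix.mulVec_mulVec, hΦS, ← Matrix.mulVec_mulVec, hΦu, Matrix.mulVec_smul]
  have hSw : S *ᵥ w = (1 - l^2) • u := by
    rw [hwdef, Matrix.mulVec_mulVec, hSS, Matrix.sub_mulVec, Matrix.one_mulVec,
      ← Matrix.mulVec_mulVec, hEu, Matrix.mulVec_smul, hEu, smul_smul]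
    funext i
    simp only [Pi.sub_apply, Pi.smul_apply, smul_eq_mul]
    ring
  have huw : u ⬝ᵥ w = 0 := by
    have h1 : (E *ᵥ u) ⬝ᵥ w = u ⬝ᵥ (E *ᵥ w) := symm_dot E hEt u w
    rw [hEu, hEw, smul_dotProduct, dotProduct_smul, smul_eq_mul, smul_eq_mul] at h1
    have h2 : l * (2 * (u ⬝ᵥ w)) = 0 := by linarith
    rcases mul_eq_zero.mp h2 with h | h
    · exact absurd h hlne
    · linarith
  have hnw : w ⬝ᵥ w = 1 - l^2 := by
    have h1 : (S *ᵥ u) ⬝ᵥ w = u ⬝ᵥ (S *ᵥ w) := symm_dot S hSt u w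
    rw [hSw, dotProduct_smul, hu, smul_eq_mul, mul_one] at h1
    rw [hwdef] at h1 ⊢
    exact h1
  have hq : (0:ℝ) < 1 - l^2 := by linarith
  have hPXu : PX *ᵥ u = (1/2 : ℝ) • (u + l • u + w) := by
    apply half_vec
    have h := congrArg (fun M => M *ᵥ u) hPXdec
    simpa [Matrix.add_mulVec, Matrix.one_mulVec, hEu, hwdef] using h
  have hPXw : PX *ᵥ w = (1/2 : ℝ) • (w + (-l) • w + (1 - l^2) • u) := by
    apply half_vec
    have h := congrArg (fun M => M *ᵥ w) hPXdec
    simpa [Matrix.add_mulVec, Matrix.one_mulVec, hEw, hSw] using h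
  have hPYu : PY *ᵥ u = (1/2 : ℝ) • (u + w - l • u) := by
    apply half_vec
    have h := congrArg (fun M => M *ᵥ u) hPYdec
    simpa [Matrix.add_mulVec, Matrix.sub_mulVec, Matrix.one_mulVec, hEu, hwdef] using h
  have hPYw : PY *ᵥ w = (1/2 : ℝ) • (w + (1 - l^2) • u - (-l) • w) := by
    apply half_vec
    have h := congrArg (fun M => M *ᵥ w) hPYdec
    simpa [Matrix.add_mulVec, Matrix.sub_mulVec, Matrix.one_mulVec, hEw, hSw] using h
  have hAu : (Φ - PX) *ᵥ u = (m - (1+l)/2) • u + (-(1/2) : ℝ) • w := by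
    rw [Matrix.sub_mulVec, hΦu, hPXu]
    funext i
    simp only [Pi.sub_apply, Pi.add_apply, Pi.smul_apply, smul_eq_mul]
    ring
  have hAw : (Φ - PX) *ᵥ w = (-(1 - l^2)/2) • u + (m - (1-l)/2) • w := by
    rw [Matrix.sub_mulVec, hΦw, hPXw]
    funext i
    simp only [Pi.sub_apply, Pi.add_apply, Pi.smul_apply, smul_eq_mul]
    ring
  have hBu : (Φ - PY) *ᵥ u = (m - (1-l)/2) • u + (-(1/2) : ℝ) • w := by
    rw [Matrix.sub_mulVec, hΦu, hPYu]
    funext i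
    simp only [Pi.sub_apply, Pi.add_apply, Pi.smul_apply, smul_eq_mul]
    ring
  have hBw : (Φ - PY) *ᵥ w = (-(1 - l^2)/2) • u + (m - (1+l)/2) • w := by
    rw [Matrix.sub_mulVec, hΦw, hPYw]
    funext i
    simp only [Pi.sub_apply, Pi.add_apply, Pi.smul_apply, smul_eq_mul]
    ring
  have dAu : ((Φ - PX) *ᵥ u) ⬝ᵥ ((Φ - PX) *ᵥ u)
      = (m - (1+l)/2)^2 + (1/4) * (1 - l^2) := by
    rw [hAu, dot_lin hu hnw huw]
    ring
  have dAw : ((Φ - PX) *ᵥ w) ⬝ᵥ ((Φ - PX) *ᵥ w)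
      = ((1 - l^2)/2)^2 + (m - (1-l)/2)^2 * (1 - l^2) := by
    rw [hAw, dot_lin hu hnw huw]
    ring
  have dBu : ((Φ - PY) *ᵥ u) ⬝ᵥ ((Φ - PY) *ᵥ u)
      = (m - (1-l)/2)^2 + (1/4) * (1 - l^2) := by
    rw [hBu, dot_lin hu hnw huw]
    ring
  have dBw : ((Φ - PY) *ᵥ w) ⬝ᵥ ((Φ - PY) *ᵥ w)
      = ((1 - l^2)/2)^2 + (m - (1+l)/2)^2 * (1 - l^2) := by
    rw [hBw, dot_lin hu hnw huw]
    ring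
  have hA := L2' (Φ - PX) u w hu hnw hq huw
  have hB := L2' (Φ - PY) u w hu hnw hq huw
  rw [dAu, dAw] at hA
  rw [dBu, dBw] at hB
  have hqinv : (1 - l^2)⁻¹ * (((1 - l^2)/2)^2 + (m - (1-l)/2)^2 * (1 - l^2))
      = (1 - l^2)/4 + (m - (1-l)/2)^2 := by
    field_simp
    ring
  have hqinv' : (1 - l^2)⁻¹ * (((1 - l^2)/2)^2 + (m - (1+l)/2)^2 * (1 - l^2))
      = (1 - l^2)/4 + (m - (1+l)/2)^2 := by
    field_simp
    ring
  rw [hqinv] at hA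
  rw [hqinv'] at hB
  nlinarith [sq_nonneg (2*m - 1), hA, hB]

lemma key {N s : ℕ} (PX PY Φ : Matrix (Fin N) (Fin N) ℝ)
    (hPX : PXᵀ = PX) (hPX2 : PX * PX = PX) (hrX : PX.rank = s)
    (hPY : PYᵀ = PY) (hPY2 : PY * PY = PY) (hrY : PY.rank = s)
    (hne : PX ≠ PY)
    (hΦ : Φᵀ = Φ) (hc1 : Φ * PX = PX * Φ) (hc2 : Φ * PY = PY * Φ) :
    1 ≤ ((Φ - PX)ᵀ * (Φ - PX)).trace + ((Φ - PY)ᵀ * (Φ - PY)).trace := by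
  have hEt : (PX - PY)ᵀ = PX - PY := by rw [transpose_sub, hPX, hPY]
  have hermE : (PX - PY).IsHermitian := herm_of_sym hEt
  have hcomm : Φ * (PX - PY) = (PX - PY) * Φ := by rw [mul_sub, sub_mul, hc1, hc2]
  have htr : (PX - PY).trace = 0 := by
    rw [Matrix.trace_sub, trace_idem (herm_of_sym hPX) hPX2,
      trace_idem (herm_of_sym hPY) hPY2, hrX, hrY, sub_self]
  obtain ⟨⟨im, him⟩, ⟨ip, hip⟩⟩ := eig_signs hermE htr (sub_ne_zero.mpr hne)
  obtain ⟨v, μ, hv1, hvE, hvΦ⟩ := joint_eigen hEt hΦ hcomm (basis_ne hermE im)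
    (hermE.mulVec_eigenvectorBasis im)
  have hl1 : (hermE.eigenvalues im) ^ 2 ≤ 1 := sq_le_one_of_eig hPX hPX2 hPY hPY2 hv1 hvE
  rcases lt_or_eq_of_le hl1 with hlt | heq
  · exact twoD hPX hPX2 hPY hPY2 hc1 hc2 hv1 hvE hvΦ (ne_of_lt him) hlt
  · -- eigenvalue is -1
    have hlm : hermE.eigenvalues im = -1 := by
      have h0 : (hermE.eigenvalues im - 1) * (hermE.eigenvalues im + 1) = 0 := by nlinarith
      rcases mul_eq_zero.mp h0 with h | h
      · nlinarith
      · linarith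
    obtain ⟨hPXv, hPYv⟩ := proj_vals hPX hPX2 hPY hPY2 hv1 hvE heq
    obtain ⟨w, μ', hw1, hwE, hwΦ⟩ := joint_eigen hEt hΦ hcomm (basis_ne hermE ip)
      (hermE.mulVec_eigenvectorBasis ip)
    have hl'1 : (hermE.eigenvalues ip) ^ 2 ≤ 1 := sq_le_one_of_eig hPX hPX2 hPY hPY2 hw1 hwE
    rcases lt_or_eq_of_le hl'1 with hlt' | heq'
    · exact twoD hPX hPX2 hPY hPY2 hc1 hc2 hw1 hwE hwΦ (ne_of_gt hip) hlt'
    · have hlp : hermE.eigenvalues ip = 1 := by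
        have h0 : (hermE.eigenvalues ip - 1) * (hermE.eigenvalues ip + 1) = 0 := by nlinarith
        rcases mul_eq_zero.mp h0 with h | h
        · linarith
        · nlinarith
      obtain ⟨hPXw, hPYw⟩ := proj_vals hPX hPX2 hPY hPY2 hw1 hwE heq'
      have hvw : v ⬝ᵥ w = 0 := by
        have h1 : ((PX - PY) *ᵥ v) ⬝ᵥ w = v ⬝ᵥ ((PX - PY) *ᵥ w) := symm_dot _ hEt v w
        rw [hvE, hwE, smul_dotProduct, dotProduct_smul, smul_eq_mul, smul_eq_mul,
          hlm, hlp] at h1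
        linarith
      have hAv : (Φ - PX) *ᵥ v = μ • v := by
        rw [Matrix.sub_mulVec, hvΦ, hPXv, hlm]
        funext i
        simp only [Pi.sub_apply, Pi.smul_apply, smul_eq_mul]
        ring
      have hAw : (Φ - PX) *ᵥ w = (μ' - 1) • w := by
        rw [Matrix.sub_mulVec, hwΦ, hPXw, hlp]
        funext i
        simp only [Pi.sub_apply, Pi.smul_apply, smul_eq_mul]
        ring
      have hBv : (Φ - PY) *ᵥ v = (μ - 1) • v := by
        rw [Matrix.sub_mulVec, hvΦ, hPYv, hlm]
        funext i
        simp only [Pi.sub_apply, Pi.smul_apply, smul_eq_mul]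
        ring
      have hBw : (Φ - PY) *ᵥ w = μ' • w := by
        rw [Matrix.sub_mulVec, hwΦ, hPYw, hlp]
        funext i
        simp only [Pi.sub_apply, Pi.smul_apply, smul_eq_mul]
        ring
      have hA := L2 (Φ - PX) v w hv1 hw1 hvw
      have hB := L2 (Φ - PY) v w hv1 hw1 hvw
      rw [hAv, hAw] at hA
      rw [hBv, hBw] at hB
      simp only [smul_dotProduct, dotProduct_smul, smul_eq_mul, hv1, hw1, mul_one] at hA hB
      nlinarith [sq_nonneg (2*μ - 1), sq_nonneg (2*μ' - 1), hA, hB]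

end Stmt13Aux

theorem stmt13 {N s : ℕ} (PX PY Φ : Matrix (Fin N) (Fin N) ℝ)
    (hPX : PXᵀ = PX) (hPX2 : PX * PX = PX) (hrX : PX.rank = s)
    (hPY : PYᵀ = PY) (hPY2 : PY * PY = PY) (hrY : PY.rank = s)
    (hne : PX ≠ PY)
    (hΦ : Φᵀ = Φ) (hc1 : Φ * PX = PX * Φ) (hc2 : Φ * PY = PY * Φ) :
    1 / Real.sqrt 2 ≤ max (frobNorm (Φ - PX)) (frobNorm (Φ - PY)) := by
  have hkey := Stmt13Aux.key PX PY Φ hPX hPX2 hrX hPY hPY2 hrY hne hΦ hc1 hc2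
  have h2 : 1 / Real.sqrt 2 = Real.sqrt (1/2) := by
    rw [one_div, one_div, Real.sqrt_inv]
  rw [h2]
  rcases le_total (((Φ - PX)ᵀ * (Φ - PX)).trace) (((Φ - PY)ᵀ * (Φ - PY)).trace) with h | h
  · apply le_max_of_le_right
    exact Real.sqrt_le_sqrt (by linarith)
  · apply le_max_of_le_left
    exact Real.sqrt_le_sqrt (by linarith)
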